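/- Let E be a topological group acting continuously by isometries on a metric space (M,d). If H is the closure of an orbit G·c of a 1-Lipschitz map c from M to a compact metric space K (in the topology of pointwise convergence on the space of 1-Lipschitz maps M → K with the induced G-action), and if G is extremely amenable, then there exists a G-fixed 1-Lipschitz map c∞ in the closure of G·c; consequently the induced map ĉ on the space of orbit closures satisfies: for every compact F ⊆ M and ε > 0 there is g ∈ G with d_K(c(p), ĉ([p])) < ε for all p ∈ g·F. -/

import Mathlib

/-- A topological group is extremely amenable if every continuous action on a nonempty
compact Hausdorff space has a fixed point. -/
def ExtremelyAmenable (G : Type) [Group G] [TopologicalSpace G] : Prop :=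
  ∀ (X : Type) [TopologicalSpace X] [CompactSpace X] [T2Space X] [Nonempty X]
    [MulAction G X], Continuous (fun p : G × X => p.1 • p.2) →
      ∃ x : X, ∀ g : G, g • x = x

/-- If a Polish-type group `G` acts continuously by isometries on a metric space `M`,
`c : M → K` is a `1`-Lipschitz map to a compact metric space, and `G` is extremely amenable,
then the closure of the orbit `G · c` (in the topology of pointwise convergence, i.e. the
product topology on `M → K`) contains a `G`-fixed `1`-Lipschitz map `c∞`; consequently,
for every compact `F ⊆ M` and `ε > 0` there is `g ∈ G` with
`dist (c p) (ĉ [p]) < ε` for all `p ∈ g • F`, i.e. `dist (c (g • p)) (c∞ p) < ε` for `p ∈ F`. -/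
theorem extremelyAmenable_fixed_coloring
    (G M K : Type) [Group G] [TopologicalSpace G] [IsTopologicalGroup G]
    [MetricSpace M] [MetricSpace K] [CompactSpace K] [MulAction G M]
    (hcont : Continuous fun p : G × M => p.1 • p.2)
    (hiso : ∀ (g : G) (x y : M), dist (g • x) (g • y) = dist x y)
    (c : M → K) (hc : LipschitzWith 1 c)
    (hEA : ExtremelyAmenable G) :
    ∃ cinf : M → K, LipschitzWith 1 cinf ∧
      cinf ∈ closure {f : M → K | ∃ g : G, f = fun p => c (g⁻¹ • p)} ∧
      (∀ (g : G) (p : M), cinf (g • p) = cinf p) ∧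
      ∀ F : Set M, IsCompact F → ∀ ε : ℝ, 0 < ε → ∃ g : G,
        ∀ p ∈ F, dist (c (g • p)) (cinf p) < ε := by
  -- the orbit and its closure
  set O : Set (M → K) := {f : M → K | ∃ g : G, f = fun p => c (g⁻¹ • p)} with hO
  set S : Set (M → K) := closure O with hS
  -- orbit elements are 1-Lipschitz
  have horbLip : ∀ f ∈ O, LipschitzWith 1 f := by
    rintro f ⟨g, rfl⟩
    have hIso : Isometry (fun p : M => g⁻¹ • p) := by
      intro x y
      rw [edist_dist, edist_dist, hiso]
    have h := hc.comp hIso.lipschitz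
    rw [mul_one] at h
    exact h
  have hSLip : ∀ f ∈ S, LipschitzWith 1 f := by
    intro f hf
    exact closure_minimal horbLip (isClosed_setOf_lipschitzWith 1) hf
  -- S is invariant under the translation action
  have hinv : ∀ (g : G), ∀ f ∈ S, (fun p => f (g⁻¹ • p)) ∈ S := by
    intro g f hf
    have hTg : Continuous fun (f : M → K) (p : M) => f (g⁻¹ • p) :=
      continuous_pi fun p => continuous_apply (g⁻¹ • p)
    have hmaps : Set.MapsTo (fun (f : M → K) (p : M) => f (g⁻¹ • p)) O O := by
      rintro f ⟨h, rfl⟩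
      exact ⟨g * h, by funext p; simp [mul_smul]⟩
    exact map_mem_closure hTg hf hmaps
  -- the compact G-space S
  haveI : CompactSpace S := isCompact_iff_compactSpace.mp isClosed_closure.isCompact
  have hcS : c ∈ S := subset_closure ⟨1, by funext p; simp⟩
  haveI : Nonempty S := ⟨⟨c, hcS⟩⟩
  letI : SMul G S := ⟨fun g f => ⟨fun p => f.1 (g⁻¹ • p), hinv g f.1 f.2⟩⟩
  have smul_def : ∀ (g : G) (f : S) (p : M), (g • f).1 p = f.1 (g⁻¹ • p) := fun _ _ _ => rfl
  letI : MulAction G S :=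
    { one_smul := fun f => by
        apply Subtype.ext; funext p; simp [smul_def]
      mul_smul := fun g h f => by
        apply Subtype.ext; funext p; simp [smul_def, mul_smul] }
  -- continuity of the action
  have hactcont : Continuous (fun p : G × S => p.1 • p.2) := by
    rw [continuous_iff_continuousAt]
    rintro ⟨g₀, f₀⟩
    apply ContinuousAt.congr (f := fun q : G × S => (⟨fun p => q.2.1 (q.1⁻¹ • p),
      hinv q.1 q.2.1 q.2.2⟩ : S))
    swap
    · filter_upwards with q; rfl
    rw [ContinuousAt, nhds_induced, Filter.tendsto_comap_iff]
    apply continuousAt_pi.mpr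
    intro p
    -- evaluation at p : q ↦ q.2.1 (q.1⁻¹ • p)
    have key : Filter.Tendsto (fun q : G × S => q.2.1 (q.1⁻¹ • p)) (nhds (g₀, f₀))
        (nhds (f₀.1 (g₀⁻¹ • p))) := by
      rw [tendsto_iff_dist_tendsto_zero]
      have hb1 : Filter.Tendsto (fun q : G × S => dist (q.1⁻¹ • p) (g₀⁻¹ • p))
          (nhds (g₀, f₀)) (nhds 0) := by
        have h1 : Continuous fun q : G × S => q.1⁻¹ • p :=
          hcont.comp ((continuous_inv.comp continuous_fst).prodMk continuous_const)
        have h1' : Continuous fun q : G × S => dist (q.1⁻¹ • p) (g₀⁻¹ • p) :=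
          h1.dist continuous_const
        simpa using h1'.tendsto (g₀, f₀)
      have hb2 : Filter.Tendsto (fun q : G × S => dist (q.2.1 (g₀⁻¹ • p)) (f₀.1 (g₀⁻¹ • p)))
          (nhds (g₀, f₀)) (nhds 0) := by
        have h2 : Continuous fun q : G × S => q.2.1 (g₀⁻¹ • p) :=
          (continuous_apply (g₀⁻¹ • p)).comp (continuous_subtype_val.comp continuous_snd)
        have h2' : Continuous fun q : G × S => dist (q.2.1 (g₀⁻¹ • p)) (f₀.1 (g₀⁻¹ • p)) :=
          h2.dist continuous_const
        simpa using h2'.tendsto (g₀, f₀)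
      have hbd : ∀ q : G × S, dist (q.2.1 (q.1⁻¹ • p)) (f₀.1 (g₀⁻¹ • p)) ≤
          dist (q.1⁻¹ • p) (g₀⁻¹ • p) + dist (q.2.1 (g₀⁻¹ • p)) (f₀.1 (g₀⁻¹ • p)) := by
        intro q
        calc dist (q.2.1 (q.1⁻¹ • p)) (f₀.1 (g₀⁻¹ • p))
            ≤ dist (q.2.1 (q.1⁻¹ • p)) (q.2.1 (g₀⁻¹ • p)) +
              dist (q.2.1 (g₀⁻¹ • p)) (f₀.1 (g₀⁻¹ • p)) := dist_triangle _ _ _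
          _ ≤ dist (q.1⁻¹ • p) (g₀⁻¹ • p) + dist (q.2.1 (g₀⁻¹ • p)) (f₀.1 (g₀⁻¹ • p)) := by
              gcongr
              simpa using (hSLip q.2.1 q.2.2).dist_le_mul (q.1⁻¹ • p) (g₀⁻¹ • p)
      have h0 : Filter.Tendsto (fun q : G × S => dist (q.1⁻¹ • p) (g₀⁻¹ • p) +
          dist (q.2.1 (g₀⁻¹ • p)) (f₀.1 (g₀⁻¹ • p))) (nhds (g₀, f₀)) (nhds 0) := by
        simpa using hb1.add hb2
      exact squeeze_zero (fun q => dist_nonneg) hbd h0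
    exact key
  -- apply extreme amenability
  obtain ⟨x, hx⟩ := hEA S hactcont
  refine ⟨x.1, hSLip x.1 x.2, x.2, ?_, ?_⟩
  · intro g p
    have := congrFun (congrArg Subtype.val (hx g⁻¹)) p
    simpa [smul_def] using this
  · intro F hF ε hε
    rcases F.eq_empty_or_nonempty with rfl | hne
    · exact ⟨1, fun p hp => absurd hp (Set.notMem_empty p)⟩
    -- cover F by finitely many ε/3-balls
    obtain ⟨t, hts, hcov⟩ := hF.elim_nhds_subcover (fun p => Metric.ball p (ε / 3))
      (fun p _ => Metric.ball_mem_nhds p (by linarith))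
    -- open neighborhood of x in the product topology
    set V : Set (M → K) := {f : M → K | ∀ q ∈ t, dist (f q) (x.1 q) < ε / 3} with hV
    have hVopen : IsOpen V := by
      have : V = ⋂ q ∈ t, (fun f : M → K => f q) ⁻¹' Metric.ball (x.1 q) (ε / 3) := by
        ext f; simp [hV, Metric.mem_ball]
      rw [this]
      exact isOpen_biInter_finset fun q _ => (continuous_apply q).isOpen_preimage _
        Metric.isOpen_ball
    have hxV : x.1 ∈ V := fun q _ => by simpa using (by linarith : (0:ℝ) < ε / 3)
    obtain ⟨f, hfV, hfO⟩ := _root_.mem_closure_iff.mp x.2 V hVopen hxV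
    obtain ⟨h, rfl⟩ := hfO
    refine ⟨h⁻¹, fun p hp => ?_⟩
    obtain ⟨q, hqt, hq⟩ := Set.mem_iUnion₂.mp (hcov hp)
    have hdq : dist p q < ε / 3 := by simpa [Metric.mem_ball] using hq
    have hfLip : LipschitzWith 1 (fun p => c (h⁻¹ • p)) := horbLip _ ⟨h, rfl⟩
    have hxLip : LipschitzWith 1 x.1 := hSLip x.1 x.2
    have h1 : dist (c (h⁻¹ • p)) (c (h⁻¹ • q)) ≤ dist p q := by
      simpa using hfLip.dist_le_mul p q
    have h2 : dist (c (h⁻¹ • q)) (x.1 q) < ε / 3 := hfV q hqt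
    have h3 : dist (x.1 q) (x.1 p) ≤ dist q p := by simpa using hxLip.dist_le_mul q p
    have hdqp : dist q p < ε / 3 := by rwa [dist_comm]
    calc dist (c (h⁻¹ • p)) (x.1 p)
        ≤ dist (c (h⁻¹ • p)) (c (h⁻¹ • q)) + dist (c (h⁻¹ • q)) (x.1 q) +
          dist (x.1 q) (x.1 p) := dist_triangle4 _ _ _ _
      _ < ε := by linarith
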